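/- Let (n_k) be lacunary with ratio α > 1 and σ_n the Fejér mean on L²(ℝ). Then for every choice of signs ε_k ∈ {−1, 1} the series ∑_{k=1}^{∞} ε_k (σ_{n_{k+1}} f − σ_{n_k} f) converges in L²(ℝ) for all f ∈ L²(ℝ), with norm bounded by C‖f‖₂ for a constant C depending only on α. -/

import Mathlib

open MeasureTheory FourierTransform

/-- Fejér multiplier symbol. -/
noncomputable def fejerSymbol (n : ℕ) (x : ℝ) : ℝ := max 0 (1 - |x| / (n + 1))

open scoped ENNReal NNReal

lemma fejerSymbol_nonneg (m : ℕ) (x : ℝ) : 0 ≤ fejerSymbol m x := le_max_left _ _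

lemma fejerSymbol_le_one (m : ℕ) (x : ℝ) : fejerSymbol m x ≤ 1 := by
  have h : (0:ℝ) ≤ |x| / (m+1) := div_nonneg (abs_nonneg x) (by positivity)
  exact max_le zero_le_one (by linarith)

lemma fejerSymbol_mono {m m' : ℕ} (h : m ≤ m') (x : ℝ) :
    fejerSymbol m x ≤ fejerSymbol m' x := by
  unfold fejerSymbol
  have h1 : |x| / ((m':ℝ) + 1) ≤ |x| / ((m:ℝ) + 1) :=
    div_le_div_of_nonneg_left (abs_nonneg x) (by positivity)
      (by exact_mod_cast Nat.succ_le_succ h)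
  exact max_le_max le_rfl (by linarith)

lemma one_sub_fejerSymbol_le (m : ℕ) (x : ℝ) : 1 - fejerSymbol m x ≤ |x| / (m+1) := by
  have := le_max_right (0:ℝ) (1 - |x| / (m+1))
  unfold fejerSymbol
  linarith

lemma tele (G : ℕ → ℝ) {a b : ℕ} (h : a ≤ b) :
    ∑ k ∈ Finset.Ioc a b, (G (k+1) - G k) = G (b+1) - G (a+1) := by
  refine Nat.le_induction ?_ ?_ b h
  · simp
  · intro m hm ih
    rw [Finset.sum_Ioc_succ_top hm, ih]
    ring

lemma lp_coeFn_sum (s : Finset ℕ) (h : ℕ → Lp ℂ 2 (volume : Measure ℝ)) :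
    ((∑ k ∈ s, h k : Lp ℂ 2 (volume : Measure ℝ)) : ℝ → ℂ)
      =ᵐ[volume] fun x => ∑ k ∈ s, (h k : ℝ → ℂ) x := by
  classical
  induction s using Finset.induction_on with
  | empty => simp only [Finset.sum_empty]; exact Lp.coeFn_zero ℂ 2 (volume : Measure ℝ)
  | @insert a s hnot ih =>
    rw [Finset.sum_insert hnot]
    filter_upwards [Lp.coeFn_add (h a) (∑ k ∈ s, h k), ih] with x h1 h2
    simp only [Pi.add_apply] at h1
    rw [h1, h2, Finset.sum_insert hnot]


theorem stmt_17
    (n : ℕ → ℕ) (hn : ∀ k, 0 < n k) (α : ℝ) (hα : 1 < α)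
    (hlac : ∀ k, α ≤ (n (k + 1) : ℝ) / (n k : ℝ))
    -- `F` is the Plancherel (Fourier) transform on `L²(ℝ)`.
    (F : Lp ℂ 2 (volume : Measure ℝ) ≃ₗᵢ[ℂ] Lp ℂ 2 (volume : Measure ℝ))
    (hF : ∀ f : Lp ℂ 2 (volume : Measure ℝ), Integrable f volume →
      (F f : ℝ → ℂ) =ᵐ[volume] 𝓕 (f : ℝ → ℂ))
    -- `σ m` is the Fejér mean: the Fourier multiplier with symbol `fejerSymbol m`.
    (σ : ℕ → (Lp ℂ 2 (volume : Measure ℝ) →ₗ[ℂ] Lp ℂ 2 (volume : Measure ℝ)))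
    (hσ : ∀ m f, (F (σ m f) : ℝ → ℂ) =ᵐ[volume]
      fun x => (fejerSymbol m x : ℂ) * (F f : ℝ → ℂ) x) :
    ∃ C : ℝ, ∀ ε : ℕ → ℝ, (∀ k, ε k = 1 ∨ ε k = -1) →
      ∀ f : Lp ℂ 2 (volume : Measure ℝ),
        ∃ g : Lp ℂ 2 (volume : Measure ℝ),
          Filter.Tendsto
            (fun N => ∑ k ∈ Finset.Icc 1 N, (ε k : ℂ) • (σ (n (k + 1)) f - σ (n k) f))
            Filter.atTop (nhds g) ∧
          ‖g‖ ≤ C * ‖f‖ := by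
  classical
  refine ⟨1, fun ε hε f => ?_⟩
  have hεabs : ∀ k, |ε k| = 1 := by intro k; rcases hε k with h | h <;> simp [h]
  -- n is strictly monotone
  have hmono : StrictMono n := by
    apply strictMono_nat_of_lt_succ
    intro k
    have hkpos : (0:ℝ) < n k := by exact_mod_cast hn k
    have h := (le_div_iff₀ hkpos).mp (hlac k)
    have : (n k : ℝ) < n (k+1) := by nlinarith
    exact_mod_cast this
  set Ff : ℝ → ℂ := (F f : ℝ → ℂ) with hFf
  set D : ℕ → Lp ℂ 2 (volume : Measure ℝ) :=
    fun k => σ (n (k+1)) f - σ (n k) f with hD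
  set Δ : ℕ → ℝ → ℝ := fun k x => fejerSymbol (n (k+1)) x - fejerSymbol (n k) x with hΔ
  set ψ : ℕ → ℝ → ℝ := fun M x => 1 - fejerSymbol (n M) x with hψ
  have hψ01 : ∀ M x, 0 ≤ ψ M x ∧ ψ M x ≤ 1 := fun M x =>
    ⟨by simp only [hψ, sub_nonneg]; exact fejerSymbol_le_one _ _,
     by simp only [hψ]; have := fejerSymbol_nonneg (n M) x; linarith⟩
  have hΔnonneg : ∀ k x, 0 ≤ Δ k x := fun k x => by
    simp only [hΔ, sub_nonneg]
    exact fejerSymbol_mono (hmono (Nat.lt_succ_self k)).le x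
  -- symbol bound on blocks
  have hsymb : ∀ a b x, |∑ k ∈ Finset.Ioc a b, ε k * Δ k x| ≤ ψ (a+1) x := by
    intro a b x
    have h1 : |∑ k ∈ Finset.Ioc a b, ε k * Δ k x| ≤ ∑ k ∈ Finset.Ioc a b, Δ k x := by
      refine (Finset.abs_sum_le_sum_abs _ _).trans ?_
      apply Finset.sum_le_sum
      intro k _
      rw [abs_mul, hεabs k, one_mul, abs_of_nonneg (hΔnonneg k x)]
    rcases le_or_gt a b with hab | hab
    · have h2 : ∑ k ∈ Finset.Ioc a b, Δ k x
          = fejerSymbol (n (b+1)) x - fejerSymbol (n (a+1)) x :=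
        tele (fun k => fejerSymbol (n k) x) hab
      have := fejerSymbol_le_one (n (b+1)) x
      refine h1.trans ?_
      rw [h2]; simp only [hψ]; linarith
    · rw [Finset.Ioc_eq_empty (by omega)] at h1 ⊢
      simpa using h1.trans (hψ01 (a+1) x).1
  -- Fourier transform of block sums
  have key : ∀ s : Finset ℕ, (F (∑ k ∈ s, (ε k : ℂ) • D k) : ℝ → ℂ)
      =ᵐ[volume] fun x => ((∑ k ∈ s, ε k * Δ k x : ℝ) : ℂ) * Ff x := by
    intro s
    have hmap : F (∑ k ∈ s, (ε k : ℂ) • D k)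
        = ∑ k ∈ s, (ε k : ℂ) • F (D k) := by
      rw [map_sum]
      exact Finset.sum_congr rfl fun k _ => by rw [LinearIsometryEquiv.map_smul]
    rw [hmap]
    have hterm : ∀ᵐ x ∂(volume : Measure ℝ), ∀ k ∈ s,
        (((ε k : ℂ) • F (D k) : Lp ℂ 2 (volume : Measure ℝ)) : ℝ → ℂ) x
          = ((ε k * Δ k x : ℝ) : ℂ) * Ff x := by
      rw [Filter.eventually_all_finset]
      intro k _
      have hFD : (F (D k) : ℝ → ℂ) =ᵐ[volume] fun x => ((Δ k x : ℝ) : ℂ) * Ff x := by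
        have h1 : F (D k) = F (σ (n (k+1)) f) - F (σ (n k) f) := by
          simp only [hD, map_sub]
        rw [h1]
        filter_upwards [Lp.coeFn_sub (F (σ (n (k+1)) f)) (F (σ (n k) f)),
          hσ (n (k+1)) f, hσ (n k) f] with x h2 h3 h4
        simp only [Pi.sub_apply] at h2
        rw [h2, h3, h4]
        simp only [hΔ]
        push_cast
        ring
      filter_upwards [Lp.coeFn_smul (ε k : ℂ) (F (D k)), hFD] with x h1 h2
      rw [h1]
      simp only [Pi.smul_apply, smul_eq_mul, h2]
      push_cast
      ring
    filter_upwards [lp_coeFn_sum s (fun k => (ε k : ℂ) • F (D k)), hterm] with x h1 h2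
    rw [h1, Finset.sum_congr rfl h2, ← Finset.sum_mul]
    push_cast
    ring_nf
  have hFfmem : eLpNorm Ff 2 volume ≠ ∞ := by
    simpa [hFf] using Lp.eLpNorm_ne_top (F f)
  have hfinpsi : ∀ M, eLpNorm (fun x => ψ M x * ‖Ff x‖) 2 volume ≤ eLpNorm Ff 2 volume := by
    intro M
    rw [← eLpNorm_norm Ff]
    apply eLpNorm_mono_real
    intro x
    rw [Real.norm_eq_abs, abs_mul, abs_norm, abs_of_nonneg (hψ01 M x).1]
    exact mul_le_of_le_one_left (norm_nonneg _) (hψ01 M x).2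
  have hψanti : ∀ M M' : ℕ, M ≤ M' → ∀ x, ψ M' x ≤ ψ M x := by
    intro M M' h x
    simp only [hψ, sub_le_sub_iff_left]
    exact fejerSymbol_mono (hmono.monotone h) x
  -- norm bound for block sums
  have block : ∀ a b M : ℕ, M ≤ a + 1 →
      ‖∑ k ∈ Finset.Ioc a b, (ε k : ℂ) • D k‖
        ≤ (eLpNorm (fun x => ψ M x * ‖Ff x‖) 2 volume).toReal := by
    intro a b M hM
    have h0 : ‖∑ k ∈ Finset.Ioc a b, (ε k : ℂ) • D k‖
        = ‖F (∑ k ∈ Finset.Ioc a b, (ε k : ℂ) • D k)‖ := (F.norm_map _).symm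
    rw [h0, Lp.norm_def]
    apply ENNReal.toReal_mono (lt_of_le_of_lt (hfinpsi M) (lt_top_iff_ne_top.2 hFfmem)).ne
    rw [eLpNorm_congr_ae (key _)]
    apply eLpNorm_mono_real
    intro x
    calc ‖((∑ k ∈ Finset.Ioc a b, ε k * Δ k x : ℝ) : ℂ) * Ff x‖
        = |∑ k ∈ Finset.Ioc a b, ε k * Δ k x| * ‖Ff x‖ := by
          rw [norm_mul, Complex.norm_real, Real.norm_eq_abs]
      _ ≤ ψ M x * ‖Ff x‖ := by
          apply mul_le_mul_of_nonneg_right _ (norm_nonneg _)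
          exact (hsymb a b x).trans (hψanti M (a+1) hM x)
  set S : ℕ → Lp ℂ 2 (volume : Measure ℝ) :=
    fun N => ∑ k ∈ Finset.Icc 1 N, (ε k : ℂ) • D k with hS
  have hIcc : ∀ N, Finset.Icc 1 N = Finset.Ioc 0 N := fun N => Finset.Icc_add_one_left_eq_Ioc 0 N
  -- uniform norm bound
  have hSnorm : ∀ N, ‖S N‖ ≤ ‖f‖ := by
    intro N
    have h1 : ‖S N‖ ≤ (eLpNorm (fun x => ψ 1 x * ‖Ff x‖) 2 volume).toReal := by
      simp only [hS, hIcc N]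
      exact block 0 N 1 le_rfl
    refine h1.trans ?_
    have h2 : (eLpNorm Ff 2 volume).toReal = ‖f‖ := by
      rw [hFf, ← Lp.norm_def, F.norm_map]
    rw [← h2]
    exact ENNReal.toReal_mono hFfmem (hfinpsi 1)
  -- Cauchy estimate
  set b : ℕ → ℝ := fun N => (eLpNorm (fun x => ψ (N+1) x * ‖Ff x‖) 2 volume).toReal with hb
  have hdist : ∀ N₁ N₂ N : ℕ, N ≤ N₁ → N ≤ N₂ → dist (S N₁) (S N₂) ≤ b N := by
    have main : ∀ N N₁ N₂ : ℕ, N ≤ N₁ → N₁ ≤ N₂ → dist (S N₁) (S N₂) ≤ b N := by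
      intro N N₁ N₂ h1 h2
      rw [dist_eq_norm_sub', hS]
      simp only [hIcc]
      have h3 : ∑ k ∈ Finset.Ioc 0 N₁, (ε k : ℂ) • D k
            + ∑ k ∈ Finset.Ioc N₁ N₂, (ε k : ℂ) • D k
          = ∑ k ∈ Finset.Ioc 0 N₂, (ε k : ℂ) • D k :=
        Finset.sum_Ioc_consecutive _ (Nat.zero_le N₁) h2
      have h4 : (∑ k ∈ Finset.Ioc 0 N₂, (ε k : ℂ) • D k)
          - ∑ k ∈ Finset.Ioc 0 N₁, (ε k : ℂ) • D k
          = ∑ k ∈ Finset.Ioc N₁ N₂, (ε k : ℂ) • D k := by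
        rw [← h3]; abel
      rw [h4]
      exact block N₁ N₂ (N+1) (by omega)
    intro N₁ N₂ N h1 h2
    rcases le_total N₁ N₂ with h | h
    · exact main N N₁ N₂ h1 h
    · rw [dist_comm]; exact main N N₂ N₁ h2 h
  -- b tends to zero (dominated convergence)
  have hb0 : Filter.Tendsto b Filter.atTop (nhds 0) := by
    have hFfm : AEMeasurable (fun x => ‖Ff x‖) volume :=
      (Lp.aestronglyMeasurable (F f)).norm.aemeasurable
    have hψcont : ∀ M, Continuous (ψ M) := by
      intro M
      have : ψ M = fun x : ℝ => 1 - max 0 (1 - |x| / ((n M : ℝ) + 1)) := rfl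
      rw [this]
      exact continuous_const.sub
        (continuous_const.max (continuous_const.sub (continuous_abs.div_const _)))
    set I : ℕ → ℝ≥0∞ :=
      fun M => ∫⁻ x, (‖ψ M x * ‖Ff x‖‖₊ : ℝ≥0∞) ^ (2:ℝ) ∂volume with hI
    have h2' : eLpNorm Ff 2 volume
        = (∫⁻ x, ((‖Ff x‖₊ : ℝ≥0∞)) ^ (2:ℝ) ∂volume) ^ (1/2 : ℝ) := by
      rw [eLpNorm_eq_lintegral_rpow_enorm_toReal (by norm_num) (by simp)]
      norm_num
      rfl
    have hInt : ∫⁻ x, ((‖Ff x‖₊ : ℝ≥0∞)) ^ (2:ℝ) ∂volume ≠ ∞ := by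
      intro hcon
      apply hFfmem
      rw [h2', hcon, ENNReal.top_rpow_of_pos (by norm_num)]
    have hIlim : Filter.Tendsto I Filter.atTop (nhds 0) := by
      have hdct := MeasureTheory.tendsto_lintegral_of_dominated_convergence'
        (μ := volume) (F := fun M x => (‖ψ M x * ‖Ff x‖‖₊ : ℝ≥0∞) ^ (2:ℝ))
        (f := fun _ => (0:ℝ≥0∞)) (bound := fun x => ((‖Ff x‖₊ : ℝ≥0∞)) ^ (2:ℝ))
        ?_ ?_ hInt ?_
      · rw [show (∫⁻ (_ : ℝ), (0:ℝ≥0∞) ∂volume) = 0 from lintegral_zero] at hdct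
        exact hdct
      · intro M
        exact (ENNReal.continuous_rpow_const.measurable.comp_aemeasurable
          (((hψcont M).aemeasurable.mul hFfm).nnnorm.coe_nnreal_ennreal))
      · intro M
        filter_upwards with x
        apply ENNReal.rpow_le_rpow _ (by norm_num)
        apply ENNReal.coe_le_coe.2
        rw [← nnnorm_norm (Ff x)]
        have h : ‖ψ M x * ‖Ff x‖‖ ≤ ‖(‖Ff x‖)‖ := by
          rw [Real.norm_eq_abs, Real.norm_eq_abs, abs_mul, abs_norm,
            abs_of_nonneg (hψ01 M x).1]
          exact mul_le_of_le_one_left (norm_nonneg _) (hψ01 M x).2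
        exact NNReal.coe_le_coe.1 (by simpa [coe_nnnorm] using h)
      · filter_upwards with x
        have h1 : Filter.Tendsto (fun M => ψ M x * ‖Ff x‖) Filter.atTop (nhds 0) := by
          have hc : Filter.Tendsto (fun M : ℕ => |x| / ((M:ℝ) + 1) * ‖Ff x‖)
              Filter.atTop (nhds 0) := by
            have h0 : Filter.Tendsto (fun M : ℕ => |x| / ((M:ℝ) + 1))
                Filter.atTop (nhds 0) := by
              have := tendsto_one_div_add_atTop_nhds_zero_nat (𝕜 := ℝ)
              have h00 := this.const_mul |x|
              simpa [div_eq_mul_inv, mul_comm, mul_assoc] using h00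
            simpa using h0.mul_const ‖Ff x‖
          apply squeeze_zero (fun M => mul_nonneg (hψ01 M x).1 (norm_nonneg _)) ?_ hc
          intro M
          apply mul_le_mul_of_nonneg_right _ (norm_nonneg _)
          calc ψ M x ≤ |x| / ((n M : ℝ) + 1) := one_sub_fejerSymbol_le (n M) x
            _ ≤ |x| / ((M:ℝ) + 1) := by
                apply div_le_div_of_nonneg_left (abs_nonneg x) (by positivity)
                have : (M:ℝ) ≤ (n M : ℝ) := by exact_mod_cast hmono.le_apply
                linarith
        have h2 : Filter.Tendsto (fun M => (‖ψ M x * ‖Ff x‖‖₊ : ℝ≥0∞))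
            Filter.atTop (nhds 0) := by
          have := h1.nnnorm
          rw [nnnorm_zero] at this
          exact ENNReal.tendsto_coe.2 this
        simpa using h2.ennrpow_const 2
    have hbeq : b = fun N => ((I (N+1)) ^ (1/2:ℝ)).toReal := by
      funext N
      simp only [hb, hI]
      rw [eLpNorm_eq_lintegral_rpow_enorm_toReal (by norm_num) (by simp)]
      norm_num
      rfl
    rw [hbeq]
    have h3 : Filter.Tendsto (fun N => I (N+1)) Filter.atTop (nhds 0) :=
      hIlim.comp (Filter.tendsto_add_atTop_nat 1)
    have h4 := h3.ennrpow_const (1/2)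
    rw [ENNReal.zero_rpow_of_pos (by norm_num)] at h4
    have h5 := (ENNReal.tendsto_toReal (by simp)).comp h4
    simpa [Function.comp_def] using h5
  -- conclude
  have hcauchy : CauchySeq S := cauchySeq_of_le_tendsto_0 b hdist hb0
  obtain ⟨g, hg⟩ := cauchySeq_tendsto_of_complete hcauchy
  refine ⟨g, hg, ?_⟩
  rw [one_mul]
  exact le_of_tendsto hg.norm (Filter.Eventually.of_forall hSnorm)
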